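/- Let n ∈ ℕ and let ℙ, ℚ be distributions over X^n. Then the sum over coordinates of expected conditional squared Hellinger distances satisfies E_{x∼ℙ}[ Σ_{i=1}^n H²(ℙ_i(·|x_{1:i−1}), ℚ_i(·|x_{1:i−1})) ] ≤ 4n · H²(ℙ, ℚ), where ℙ_i(·|x_{1:i−1}) and ℚ_i(·|x_{1:i−1}) are the conditional laws of x_i given the prefix. -/

import Mathlib

set_option maxHeartbeats 1600000
set_option linter.unusedSectionVars false
set_option linter.dupNamespace false

open Finset Real

namespace HellingerAux
variable {ι : Type*}

/-- (√Σp − √Σq)² ≤ Σ(√p−√q)² for nonneg p, q. -/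
lemma sq_sqrt_sub_le (s : Finset ι) (p q : ι → ℝ)
    (hp : ∀ i, 0 ≤ p i) (hq : ∀ i, 0 ≤ q i) :
    (Real.sqrt (∑ i ∈ s, p i) - Real.sqrt (∑ i ∈ s, q i)) ^ 2 ≤
      ∑ i ∈ s, (Real.sqrt (p i) - Real.sqrt (q i)) ^ 2 := by
  have hP : 0 ≤ ∑ i ∈ s, p i := sum_nonneg fun i _ => hp i
  have hQ : 0 ≤ ∑ i ∈ s, q i := sum_nonneg fun i _ => hq i
  have cs : ∑ i ∈ s, Real.sqrt (p i) * Real.sqrt (q i) ≤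
      Real.sqrt (∑ i ∈ s, p i) * Real.sqrt (∑ i ∈ s, q i) :=
    Real.sum_sqrt_mul_sqrt_le s hp hq
  have expand : ∀ a b : ℝ, 0 ≤ a → 0 ≤ b →
      (Real.sqrt a - Real.sqrt b) ^ 2 = a + b - 2 * (Real.sqrt a * Real.sqrt b) := by
    intro a b ha hb
    rw [sub_sq, Real.sq_sqrt ha, Real.sq_sqrt hb]; ring
  rw [expand _ _ hP hQ]
  have h2 : ∑ i ∈ s, (Real.sqrt (p i) - Real.sqrt (q i)) ^ 2
      = ∑ i ∈ s, (p i + q i - 2 * (Real.sqrt (p i) * Real.sqrt (q i))) :=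
    sum_congr rfl fun i _ => expand _ _ (hp i) (hq i)
  rw [h2, sum_sub_distrib, sum_add_distrib, ← mul_sum]
  linarith

/-- Minkowski-type: Σ(u+v)² ≤ (√Σu² + √Σv²)². -/
lemma sum_add_sq_le (s : Finset ι) (u v : ι → ℝ) :
    ∑ i ∈ s, (u i + v i) ^ 2 ≤
      (Real.sqrt (∑ i ∈ s, u i ^ 2) + Real.sqrt (∑ i ∈ s, v i ^ 2)) ^ 2 := by
  have hU : 0 ≤ ∑ i ∈ s, u i ^ 2 := sum_nonneg fun i _ => sq_nonneg _
  have hV : 0 ≤ ∑ i ∈ s, v i ^ 2 := sum_nonneg fun i _ => sq_nonneg _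
  have cs : ∑ i ∈ s, u i * v i ≤
      Real.sqrt (∑ i ∈ s, u i ^ 2) * Real.sqrt (∑ i ∈ s, v i ^ 2) :=
    Real.sum_mul_le_sqrt_mul_sqrt s u v
  have expand : ∑ i ∈ s, (u i + v i) ^ 2
      = ∑ i ∈ s, (u i ^ 2 + v i ^ 2 + 2 * (u i * v i)) :=
    sum_congr rfl fun i _ => by ring
  rw [expand, sum_add_distrib, sum_add_distrib, ← mul_sum, add_sq,
    Real.sq_sqrt hU, Real.sq_sqrt hV]
  linarith
open Finset Real

variable {X : Type} [Fintype X] [DecidableEq X] {n : ℕ}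


def prefSum (R : (Fin n → X) → ℝ) (k : ℕ) (x : Fin n → X) : ℝ :=
  ∑ w : Fin n → X, if ∀ j : Fin n, (j : ℕ) < k → w j = x j then R w else 0

def trunc (x0 : X) (k : ℕ) (x : Fin n → X) : Fin n → X :=
  fun j => if (j : ℕ) < k then x j else x0

def S (x0 : X) (k : ℕ) : Finset (Fin n → X) :=
  Finset.univ.filter (fun y => trunc x0 k y = y)

lemma mem_S {x0 : X} {k : ℕ} {y : Fin n → X} : y ∈ S x0 k ↔ trunc x0 k y = y := by
  simp [S]

lemma trunc_idem (x0 : X) (k : ℕ) (x : Fin n → X) :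
    trunc x0 k (trunc x0 k x) = trunc x0 k x := by
  funext j; simp only [trunc]; split <;> simp_all

lemma trunc_mem (x0 : X) (k : ℕ) (x : Fin n → X) : trunc x0 k x ∈ S x0 k :=
  mem_S.2 (trunc_idem x0 k x)

lemma prefSum_congr (R : (Fin n → X) → ℝ) (k : ℕ) {x y : Fin n → X}
    (h : ∀ j : Fin n, (j : ℕ) < k → x j = y j) :
    prefSum R k x = prefSum R k y := by
  refine Finset.sum_congr rfl fun w _ => ?_
  have : (∀ j : Fin n, (j : ℕ) < k → w j = x j) ↔ (∀ j : Fin n, (j : ℕ) < k → w j = y j) := by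
    constructor <;> intro hw j hj
    · rw [hw j hj, h j hj]
    · rw [hw j hj, ← h j hj]
  rw [if_congr this rfl rfl]

lemma prefSum_trunc (R : (Fin n → X) → ℝ) (x0 : X) (k : ℕ) (x : Fin n → X) :
    prefSum R k (trunc x0 k x) = prefSum R k x :=
  prefSum_congr R k fun j hj => by simp [trunc, hj]

lemma prefSum_nonneg {R : (Fin n → X) → ℝ} (hR : ∀ w, 0 ≤ R w) (k : ℕ) (x : Fin n → X) :
    0 ≤ prefSum R k x :=
  Finset.sum_nonneg fun w _ => by split <;> [exact hR w; exact le_rfl]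

lemma prefSum_pos {R : (Fin n → X) → ℝ} (hR : ∀ w, 0 < R w) (k : ℕ) (x : Fin n → X) :
    0 < prefSum R k x := by
  have h1 : (if ∀ j : Fin n, (j : ℕ) < k → x j = x j then R x else 0) ≤
      ∑ w : Fin n → X, if ∀ j : Fin n, (j : ℕ) < k → w j = x j then R w else 0 :=
    Finset.single_le_sum (f := fun w => if ∀ j : Fin n, (j : ℕ) < k → w j = x j then R w else 0)
      (fun w _ => by split <;> [exact (hR w).le; exact le_rfl]) (Finset.mem_univ x)
  rw [if_pos (fun j hj => rfl)] at h1
  exact lt_of_lt_of_le (hR x) h1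

lemma prefSum_succ_le {R : (Fin n → X) → ℝ} (hR : ∀ w, 0 ≤ R w) (k : ℕ) (x : Fin n → X) :
    prefSum R (k + 1) x ≤ prefSum R k x := by
  refine Finset.sum_le_sum fun w _ => ?_
  by_cases h : ∀ j : Fin n, (j : ℕ) < k + 1 → w j = x j
  · rw [if_pos h, if_pos fun j hj => h j (Nat.lt_succ_of_lt hj)]
  · rw [if_neg h]; split <;> [exact hR w; exact le_rfl]

lemma prefSum_eq_fiber (R : (Fin n → X) → ℝ) (x0 : X) (k : ℕ) {y : Fin n → X}
    (hy : trunc x0 k y = y) :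
    prefSum R k y = ∑ x ∈ Finset.univ.filter (fun x => trunc x0 k x = y), R x := by
  rw [Finset.sum_filter]
  refine Finset.sum_congr rfl fun w _ => ?_
  have hcond : (∀ j : Fin n, (j : ℕ) < k → w j = y j) ↔ trunc x0 k w = y := by
    constructor
    · intro h; funext j
      by_cases hj : (j : ℕ) < k
      · simp only [trunc, if_pos hj]; exact h j hj
      · simp only [trunc, if_neg hj]
        have := congrFun hy j
        simpa only [trunc, if_neg hj] using this
    · intro h j hj
      have := congrFun h j
      simpa only [trunc, if_pos hj] using this
  rw [if_congr hcond rfl rfl]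

/-- Data processing: Hellinger of prefix marginals is at most Hellinger of the joint. -/
lemma dataproc (P Q : (Fin n → X) → ℝ) (hP : ∀ w, 0 ≤ P w) (hQ : ∀ w, 0 ≤ Q w)
    (x0 : X) (k : ℕ) :
    ∑ y ∈ S x0 k, (Real.sqrt (prefSum P k y) - Real.sqrt (prefSum Q k y)) ^ 2 ≤
      ∑ w, (Real.sqrt (P w) - Real.sqrt (Q w)) ^ 2 := by
  calc ∑ y ∈ S x0 k, (Real.sqrt (prefSum P k y) - Real.sqrt (prefSum Q k y)) ^ 2
      ≤ ∑ y ∈ S x0 k, ∑ x ∈ Finset.univ.filter (fun x => trunc x0 k x = y),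
          (Real.sqrt (P x) - Real.sqrt (Q x)) ^ 2 := by
        refine Finset.sum_le_sum fun y hy => ?_
        rw [prefSum_eq_fiber P x0 k (mem_S.1 hy), prefSum_eq_fiber Q x0 k (mem_S.1 hy)]
        exact sq_sqrt_sub_le _ P Q hP hQ
    _ = ∑ w, (Real.sqrt (P w) - Real.sqrt (Q w)) ^ 2 :=
        Finset.sum_fiberwise_of_maps_to (fun x _ => trunc_mem x0 k x) _

/-- Regrouping a `P`-expectation of a prefix-measurable function. -/
lemma regroup (P : (Fin n → X) → ℝ) (x0 : X) (k : ℕ) (g : (Fin n → X) → ℝ) :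
    ∑ x, P x * g (trunc x0 k x) = ∑ y ∈ S x0 k, prefSum P k y * g y := by
  rw [← Finset.sum_fiberwise_of_maps_to (fun x (_ : x ∈ Finset.univ) => trunc_mem x0 k x)
    (fun x => P x * g (trunc x0 k x))]
  refine Finset.sum_congr rfl fun y hy => ?_
  rw [prefSum_eq_fiber P x0 k (mem_S.1 hy), Finset.sum_mul]
  refine Finset.sum_congr rfl fun x hx => ?_
  rw [(Finset.mem_filter.1 hx).2]

lemma prefSum_succ_sum (R : (Fin n → X) → ℝ) (i : Fin n) (y : Fin n → X) :
    ∑ a : X, prefSum R ((i : ℕ) + 1) (Function.update y i a) = prefSum R (i : ℕ) y := by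
  unfold prefSum
  rw [Finset.sum_comm]
  refine Finset.sum_congr rfl fun w _ => ?_
  by_cases hb : ∀ j : Fin n, (j : ℕ) < (i : ℕ) → w j = y j
  · rw [if_pos hb]
    rw [Finset.sum_eq_single (w i)]
    · rw [if_pos]
      intro j hj
      rcases Nat.lt_succ_iff_lt_or_eq.mp hj with h | h
      · rw [Function.update_of_ne (Fin.ne_of_val_ne (Nat.ne_of_lt h))]
        exact hb j h
      · have hji : j = i := Fin.ext h
        subst hji
        rw [Function.update_self]
    · intro a _ ha
      apply if_neg
      intro hC
      exact ha (by simpa using (hC i (Nat.lt_succ_self _)).symm)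
    · intro h; exact absurd (Finset.mem_univ _) h
  · rw [if_neg hb, Finset.sum_eq_zero]
    intro a _
    apply if_neg
    intro hC
    apply hb
    intro j hj
    have := hC j (Nat.lt_succ_of_lt hj)
    rwa [Function.update_of_ne (Fin.ne_of_val_ne (Nat.ne_of_lt hj))] at this

lemma reindex (x0 : X) (i : Fin n) (f : (Fin n → X) → ℝ) :
    ∑ y ∈ S x0 (i : ℕ), ∑ a : X, f (Function.update y i a)
      = ∑ z ∈ S x0 ((i : ℕ) + 1), f z := by
  rw [← Finset.sum_product']
  refine Finset.sum_bij' (fun p _ => Function.update p.1 i p.2)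
    (fun z _ => (trunc x0 (i : ℕ) z, z i)) ?_ ?_ ?_ ?_ ?_
  · rintro ⟨y, a⟩ hp
    have hy : trunc x0 (i : ℕ) y = y := mem_S.1 (Finset.mem_product.1 hp).1
    refine mem_S.2 (funext fun j => ?_)
    by_cases hj : (j : ℕ) < (i : ℕ) + 1
    · simp only [trunc, if_pos hj]
    · simp only [trunc, if_neg hj]
      rw [Function.update_of_ne (Fin.ne_of_val_ne (by omega))]
      have := congrFun hy j
      simpa only [trunc, if_neg (show ¬((j : ℕ) < (i : ℕ)) by omega)] using this
  · intro z _
    exact Finset.mem_product.2 ⟨trunc_mem x0 _ z, Finset.mem_univ _⟩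
  · rintro ⟨y, a⟩ hp
    have hy : trunc x0 (i : ℕ) y = y := mem_S.1 (Finset.mem_product.1 hp).1
    refine Prod.ext ?_ (Function.update_self _ _ _)
    funext j
    by_cases hj : (j : ℕ) < (i : ℕ)
    · simp only [trunc, if_pos hj]
      exact Function.update_of_ne (Fin.ne_of_val_ne (by omega)) _ _
    · simp only [trunc, if_neg hj]
      have := congrFun hy j
      simpa only [trunc, if_neg hj] using this
  · intro z hz
    have hz' : trunc x0 ((i : ℕ) + 1) z = z := mem_S.1 hz
    show Function.update (trunc x0 (i : ℕ) z) i (z i) = z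
    funext j
    by_cases hji : j = i
    · subst hji; simp [Function.update_self]
    · rw [Function.update_of_ne hji]
      by_cases hj : (j : ℕ) < (i : ℕ)
      · simp only [trunc, if_pos hj]
      · simp only [trunc, if_neg hj]
        have := congrFun hz' j
        have hj1 : ¬((j : ℕ) < (i : ℕ) + 1) := by
          have : (j : ℕ) ≠ (i : ℕ) := fun h => hji (Fin.ext h)
          omega
        simpa only [trunc, if_neg hj1] using this
  · rintro ⟨y, a⟩ _
    rfl

/-- The per-coordinate bound: expected conditional squared Hellinger ≤ 4·H². -/
lemma per_coordinate (P Q : (Fin n → X) → ℝ) (hP0 : ∀ w, 0 ≤ P w) (hQ0 : ∀ w, 0 < Q w)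
    (x0 : X) (i : Fin n) :
    ∑ x, P x * ∑ a : X,
      (Real.sqrt (prefSum P ((i : ℕ) + 1) (Function.update x i a) / prefSum P (i : ℕ) x)
       - Real.sqrt (prefSum Q ((i : ℕ) + 1) (Function.update x i a) / prefSum Q (i : ℕ) x)) ^ 2
    ≤ 4 * ∑ w, (Real.sqrt (P w) - Real.sqrt (Q w)) ^ 2 := by
  set H2 := ∑ w, (Real.sqrt (P w) - Real.sqrt (Q w)) ^ 2 with hH2
  have hH2nn : 0 ≤ H2 := Finset.sum_nonneg fun w _ => sq_nonneg _
  have hQ0' : ∀ w, 0 ≤ Q w := fun w => (hQ0 w).le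
  set k : ℕ := (i : ℕ) with hk
  set g : (Fin n → X) → ℝ := fun y => ∑ a : X,
      (Real.sqrt (prefSum P (k + 1) (Function.update y i a) / prefSum P k y)
       - Real.sqrt (prefSum Q (k + 1) (Function.update y i a) / prefSum Q k y)) ^ 2 with hg
  -- update args agree below k+1 after truncation at k
  have hupd : ∀ (R : (Fin n → X) → ℝ) (x : Fin n → X) (a : X),
      prefSum R (k + 1) (Function.update (trunc x0 k x) i a)
        = prefSum R (k + 1) (Function.update x i a) := by
    intro R x a
    refine prefSum_congr R (k + 1) fun j hj => ?_
    by_cases hji : j = i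
    · subst hji; rw [Function.update_self, Function.update_self]
    · rw [Function.update_of_ne hji, Function.update_of_ne hji]
      have : (j : ℕ) < k := by
        have : (j : ℕ) ≠ (i : ℕ) := fun h => hji (Fin.ext h)
        omega
      simp [trunc, this]
  have hgtrunc : ∀ x, g (trunc x0 k x) = g x := by
    intro x
    refine Finset.sum_congr rfl fun a _ => ?_
    rw [hupd P x a, hupd Q x a, prefSum_trunc, prefSum_trunc]
  have step1 : ∑ x, P x * g x = ∑ y ∈ S x0 k, prefSum P k y * g y := by
    rw [← regroup]
    exact Finset.sum_congr rfl fun x _ => by rw [hgtrunc x]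
  have step2 : ∀ y ∈ S x0 k, prefSum P k y * g y
      = ∑ a : X, (Real.sqrt (prefSum P (k + 1) (Function.update y i a))
        - Real.sqrt (prefSum P k y * prefSum Q (k + 1) (Function.update y i a)
            / prefSum Q k y)) ^ 2 := by
    intro y _
    rcases (prefSum_nonneg hP0 k y).eq_or_lt with hp | hp
    · rw [← hp, zero_mul]
      symm
      refine Finset.sum_eq_zero fun a _ => ?_
      have hA0 : prefSum P (k + 1) (Function.update y i a) = 0 := by
        have h1 : prefSum P (k + 1) (Function.update y i a)
            ≤ prefSum P k (Function.update y i a) := prefSum_succ_le hP0 k _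
        have h2 : prefSum P k (Function.update y i a) = prefSum P k y :=
          prefSum_congr P k fun j hj =>
            Function.update_of_ne (Fin.ne_of_val_ne (by omega)) _ _
        have h3 := prefSum_nonneg hP0 (k + 1) (Function.update y i a)
        rw [h2, ← hp] at h1
        linarith
      rw [hA0]
      simp
    · rw [hg, Finset.mul_sum]
      refine Finset.sum_congr rfl fun a _ => ?_
      set p := prefSum P k y
      set q := prefSum Q k y with hqdef
      set A := prefSum P (k + 1) (Function.update y i a)
      set B := prefSum Q (k + 1) (Function.update y i a)
      have hq : 0 < q := prefSum_pos hQ0 k y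
      calc p * (Real.sqrt (A / p) - Real.sqrt (B / q)) ^ 2
          = (Real.sqrt p * (Real.sqrt (A / p) - Real.sqrt (B / q))) ^ 2 := by
            rw [mul_pow, Real.sq_sqrt hp.le]
        _ = (Real.sqrt (p * (A / p)) - Real.sqrt (p * (B / q))) ^ 2 := by
            rw [mul_sub, ← Real.sqrt_mul hp.le, ← Real.sqrt_mul hp.le]
        _ = (Real.sqrt A - Real.sqrt (p * B / q)) ^ 2 := by
            rw [show p * (A / p) = A by field_simp, ← mul_div_assoc]
  -- Now the Minkowski step over the product index
  have hF : ∀ y a, (0:ℝ) ≤ prefSum P (k+1) (Function.update y i a) :=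
    fun y a => prefSum_nonneg hP0 _ _
  have step3 : ∑ y ∈ S x0 k, prefSum P k y * g y
      ≤ (Real.sqrt (∑ y ∈ S x0 k, ∑ a : X,
            (Real.sqrt (prefSum P (k + 1) (Function.update y i a))
             - Real.sqrt (prefSum Q (k + 1) (Function.update y i a))) ^ 2)
        + Real.sqrt (∑ y ∈ S x0 k, ∑ a : X,
            (Real.sqrt (prefSum Q (k + 1) (Function.update y i a))
             - Real.sqrt (prefSum P k y * prefSum Q (k + 1) (Function.update y i a)
                 / prefSum Q k y)) ^ 2)) ^ 2 := by
    rw [Finset.sum_congr rfl step2]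
    rw [← Finset.sum_product']
    rw [← Finset.sum_product' (f := fun y a =>
      (Real.sqrt (prefSum P (k + 1) (Function.update y i a))
       - Real.sqrt (prefSum Q (k + 1) (Function.update y i a))) ^ 2)]
    rw [← Finset.sum_product' (f := fun y a =>
      (Real.sqrt (prefSum Q (k + 1) (Function.update y i a))
       - Real.sqrt (prefSum P k y * prefSum Q (k + 1) (Function.update y i a)
           / prefSum Q k y)) ^ 2)]
    have := sum_add_sq_le ((S x0 k) ×ˢ (Finset.univ : Finset X))
      (fun p => Real.sqrt (prefSum P (k + 1) (Function.update p.1 i p.2))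
        - Real.sqrt (prefSum Q (k + 1) (Function.update p.1 i p.2)))
      (fun p => Real.sqrt (prefSum Q (k + 1) (Function.update p.1 i p.2))
        - Real.sqrt (prefSum P k p.1 * prefSum Q (k + 1) (Function.update p.1 i p.2)
            / prefSum Q k p.1))
    refine le_trans (le_of_eq ?_) this
    exact Finset.sum_congr rfl fun p _ => by ring_nf
  -- Bound the two pieces by H2
  have boundA : ∑ y ∈ S x0 k, ∑ a : X,
      (Real.sqrt (prefSum P (k + 1) (Function.update y i a))
       - Real.sqrt (prefSum Q (k + 1) (Function.update y i a))) ^ 2 ≤ H2 := by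
    rw [reindex x0 i (fun z => (Real.sqrt (prefSum P (k+1) z) - Real.sqrt (prefSum Q (k+1) z)) ^ 2)]
    exact dataproc P Q hP0 hQ0' x0 (k + 1)
  have boundB : ∑ y ∈ S x0 k, ∑ a : X,
      (Real.sqrt (prefSum Q (k + 1) (Function.update y i a))
       - Real.sqrt (prefSum P k y * prefSum Q (k + 1) (Function.update y i a)
           / prefSum Q k y)) ^ 2 ≤ H2 := by
    have inner : ∀ y ∈ S x0 k, ∑ a : X,
        (Real.sqrt (prefSum Q (k + 1) (Function.update y i a))
         - Real.sqrt (prefSum P k y * prefSum Q (k + 1) (Function.update y i a)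
             / prefSum Q k y)) ^ 2
        = (Real.sqrt (prefSum Q k y) - Real.sqrt (prefSum P k y)) ^ 2 := by
      intro y _
      set p := prefSum P k y
      set q := prefSum Q k y
      have hq : 0 < q := prefSum_pos hQ0 k y
      have hp : 0 ≤ p := prefSum_nonneg hP0 k y
      have key : ∀ a : X,
          (Real.sqrt (prefSum Q (k + 1) (Function.update y i a))
           - Real.sqrt (p * prefSum Q (k + 1) (Function.update y i a) / q)) ^ 2
          = (prefSum Q (k + 1) (Function.update y i a) / q)
              * (Real.sqrt q - Real.sqrt p) ^ 2 := by
        intro a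
        set B := prefSum Q (k + 1) (Function.update y i a) with hBdef
        have hB : 0 ≤ B := prefSum_nonneg hQ0' _ _
        have hBq : 0 ≤ B / q := div_nonneg hB hq.le
        have h1 : Real.sqrt B = Real.sqrt (B / q) * Real.sqrt q := by
          rw [← Real.sqrt_mul hBq, div_mul_cancel₀ _ hq.ne']
        have h2 : Real.sqrt (p * B / q) = Real.sqrt (B / q) * Real.sqrt p := by
          rw [← Real.sqrt_mul hBq, div_mul_eq_mul_div, mul_comm B p]
        rw [h1, h2, ← mul_sub, mul_pow, Real.sq_sqrt hBq]
      rw [Finset.sum_congr rfl fun a _ => key a, ← Finset.sum_mul, ← Finset.sum_div,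
        prefSum_succ_sum Q i y, div_self hq.ne', one_mul]
    rw [Finset.sum_congr rfl inner]
    calc ∑ y ∈ S x0 k, (Real.sqrt (prefSum Q k y) - Real.sqrt (prefSum P k y)) ^ 2
        ≤ ∑ w, (Real.sqrt (Q w) - Real.sqrt (P w)) ^ 2 := dataproc Q P hQ0' hP0 x0 k
      _ = H2 := Finset.sum_congr rfl fun w _ => by ring
  -- Conclude
  have final : (Real.sqrt (∑ y ∈ S x0 k, ∑ a : X,
        (Real.sqrt (prefSum P (k + 1) (Function.update y i a))
         - Real.sqrt (prefSum Q (k + 1) (Function.update y i a))) ^ 2)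
      + Real.sqrt (∑ y ∈ S x0 k, ∑ a : X,
        (Real.sqrt (prefSum Q (k + 1) (Function.update y i a))
         - Real.sqrt (prefSum P k y * prefSum Q (k + 1) (Function.update y i a)
             / prefSum Q k y)) ^ 2)) ^ 2 ≤ 4 * H2 := by
    have hA' := Real.sqrt_le_sqrt boundA
    have hB' := Real.sqrt_le_sqrt boundB
    have hstep := pow_le_pow_left₀ (add_nonneg (Real.sqrt_nonneg _) (Real.sqrt_nonneg _))
      (add_le_add hA' hB') 2
    refine le_trans hstep ?_
    rw [show Real.sqrt H2 + Real.sqrt H2 = 2 * Real.sqrt H2 by ring, mul_pow,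
      Real.sq_sqrt hH2nn]
    norm_num
  calc ∑ x, P x * g x = ∑ y ∈ S x0 k, prefSum P k y * g y := step1
    _ ≤ _ := step3
    _ ≤ 4 * H2 := final

end HellingerAux

/-- Reverse chain rule for squared Hellinger distance (with a factor `n`): for distributions
`ℙ, ℚ` over `X^n` (with `ℚ` everywhere positive so that conditionals are well-defined), the
`ℙ`-expected sum over coordinates of conditional squared Hellinger distances is at most
`4n·H²(ℙ, ℚ)`. -/
theorem hellinger_reverse_chain_bound {X : Type} [Fintype X] [DecidableEq X] (n : ℕ)
    (P Q : (Fin n → X) → ℝ)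
    (hP0 : ∀ w, 0 ≤ P w) (hQ0 : ∀ w, 0 < Q w)
    (hP1 : ∑ w, P w = 1) (hQ1 : ∑ w, Q w = 1) :
    let pref := fun (R : (Fin n → X) → ℝ) (i : ℕ) (x : Fin n → X) =>
      ∑ w : Fin n → X, if ∀ j : Fin n, (j : ℕ) < i → w j = x j then R w else 0
    let cond := fun (R : (Fin n → X) → ℝ) (i : Fin n) (x : Fin n → X) (a : X) =>
      pref R ((i : ℕ) + 1) (Function.update x i a) / pref R (i : ℕ) x
    (∑ x, P x * ∑ i : Fin n, ∑ a : X,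
        (Real.sqrt (cond P i x a) - Real.sqrt (cond Q i x a)) ^ 2) ≤
      4 * n * ∑ w, (Real.sqrt (P w) - Real.sqrt (Q w)) ^ 2 := by
  intro pref cond
  rcases Nat.eq_zero_or_pos n with hn | hn
  · subst hn
    simp
  · have hX : Nonempty X := by
      by_contra h
      have hE : IsEmpty X := not_nonempty_iff.mp h
      have hFn : Nonempty (Fin n) := ⟨⟨0, hn⟩⟩
      have hE2 : IsEmpty (Fin n → X) := by infer_instance
      rw [Finset.univ_eq_empty, Finset.sum_empty] at hQ1
      exact absurd hQ1 (by norm_num)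
    obtain ⟨x0⟩ := hX
    show (∑ x, P x * ∑ i : Fin n, ∑ a : X,
        (Real.sqrt (HellingerAux.prefSum P ((i : ℕ) + 1) (Function.update x i a)
            / HellingerAux.prefSum P (i : ℕ) x)
         - Real.sqrt (HellingerAux.prefSum Q ((i : ℕ) + 1) (Function.update x i a)
            / HellingerAux.prefSum Q (i : ℕ) x)) ^ 2) ≤
      4 * n * ∑ w, (Real.sqrt (P w) - Real.sqrt (Q w)) ^ 2
    have swap : (∑ x, P x * ∑ i : Fin n, ∑ a : X,
        (Real.sqrt (HellingerAux.prefSum P ((i : ℕ) + 1) (Function.update x i a)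
            / HellingerAux.prefSum P (i : ℕ) x)
         - Real.sqrt (HellingerAux.prefSum Q ((i : ℕ) + 1) (Function.update x i a)
            / HellingerAux.prefSum Q (i : ℕ) x)) ^ 2)
        = ∑ i : Fin n, ∑ x, P x * ∑ a : X,
        (Real.sqrt (HellingerAux.prefSum P ((i : ℕ) + 1) (Function.update x i a)
            / HellingerAux.prefSum P (i : ℕ) x)
         - Real.sqrt (HellingerAux.prefSum Q ((i : ℕ) + 1) (Function.update x i a)
            / HellingerAux.prefSum Q (i : ℕ) x)) ^ 2 := by
      rw [Finset.sum_congr rfl fun x _ => Finset.mul_sum _ _ _, Finset.sum_comm]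
    rw [swap]
    refine le_trans (Finset.sum_le_sum fun i _ =>
      HellingerAux.per_coordinate P Q hP0 hQ0 x0 i) ?_
    rw [Finset.sum_const, Finset.card_univ, Fintype.card_fin, nsmul_eq_mul]
    exact le_of_eq (by ring)
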